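/- Let A be an n×n real matrix (n ≥ 2) having a real eigenpair (λ, v), i.e. Av = λv with λ ∈ ℝ, where v ∈ ℝ^n has no zero components, and let D = diag(v). Then for every p ∈ ℕ ∪ {∞} with p ≥ 1 and every positive integer k: |det(A)| ≤ |λ| · (τ_p(D^{-1} A^k D))^{(n−1)/k}. In particular, |det(A)| ≤ |λ| · τ_p(D^{-1} A^{n−1} D). -/

import Mathlib

open Matrix
open scoped ENNReal

/-- Non-increasing (descending) sort of a list of reals. -/
noncomputable def sortDesc (l : List ℝ) : List ℝ := (l.insertionSort (· ≤ ·)).reverse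

/-- Given the descending rearrangement `l` of `n` numbers, the sum of the largest
(about) half minus the sum of the smallest (about) half, skipping the middle
element when `n` is odd. -/
noncomputable def halfSumDiff (n : ℕ) (l : List ℝ) : ℝ :=
  if n % 2 = 1 then (l.take ((n - 1) / 2)).sum - (l.drop ((n + 1) / 2)).sum
  else (l.take (n / 2)).sum - (l.drop (n / 2)).sum

/-- Radius of the `i`-th Gershgorin disc of the second type of `M`, computed from
the `i`-th row of `M` with the diagonal entry replaced by `0`. -/
noncomputable def secondTypeRadius {n : ℕ} (M : Matrix (Fin n) (Fin n) ℝ) (i : Fin n) : ℝ :=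
  halfSumDiff n (sortDesc (List.ofFn fun j : Fin n => if j = i then 0 else M i j))

/-- The `i`-th Gershgorin disc of the second type of `M`. -/
noncomputable def secondTypeDisc {n : ℕ} (M : Matrix (Fin n) (Fin n) ℝ) (i : Fin n) : Set ℂ :=
  Metric.closedBall ((M i i : ℝ) : ℂ) (secondTypeRadius M i)

/-- The Gershgorin region of the second type of `M`. -/
noncomputable def secondTypeRegion {n : ℕ} (M : Matrix (Fin n) (Fin n) ℝ) : Set ℂ :=
  ⋃ i : Fin n, secondTypeDisc M i

/-- `μ` is a (complex) eigenvalue of the real matrix `A`, i.e. a complex root of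
its characteristic polynomial. -/
def IsEigenvalueC {n : ℕ} (A : Matrix (Fin n) (Fin n) ℝ) (μ : ℂ) : Prop :=
  ((A.map ((↑) : ℝ → ℂ)).charpoly).IsRoot μ

/-- The `k`-th largest element (1-indexed) among the `n - 1` off-diagonal entries of
column `j` of `B`. -/
noncomputable def kthLargestOffDiag {n : ℕ} (B : Matrix (Fin n) (Fin n) ℝ) (j : Fin n)
    (k : ℕ) : ℝ :=
  (sortDesc (((List.ofFn fun i : Fin n => B i j).eraseIdx j.val))).getD (k - 1) 0

/-- The ℓ_p norm of a vector in ℝ^n. -/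
noncomputable def lpNorm {n : ℕ} (p : ℝ≥0∞) (x : Fin n → ℝ) : ℝ :=
  @norm (PiLp p fun _ : Fin n => ℝ) _ ((WithLp.equiv p (∀ _ : Fin n, ℝ)).symm x)

/-- The seminorm-like quantity `τ_p(B)`: the supremum of `‖Bᵀ x‖_p` over all real
vectors `x` with `xᵀ e = 0` and `‖x‖_p = 1`. -/
noncomputable def tau {n : ℕ} (p : ℝ≥0∞) (B : Matrix (Fin n) (Fin n) ℝ) : ℝ :=
  sSup { t : ℝ | ∃ x : Fin n → ℝ, (∑ i, x i) = 0 ∧ lpNorm p x = 1 ∧ t = lpNorm p (Bᵀ *ᵥ x) }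

/-- The Ostrowski–Brauer set `Γ(M)` of a real square matrix `M`. -/
noncomputable def brauerSet {n : ℕ} (M : Matrix (Fin n) (Fin n) ℝ) : Set ℂ :=
  ⋃ (i : Fin n) (j : Fin n) (_ : i < j),
    { y : ℂ | ‖y - (M i i : ℝ)‖ * ‖y - (M j j : ℝ)‖ ≤
        (∑ k ∈ Finset.univ.filter fun k => k ≠ i, |M i k|) *
        (∑ k ∈ Finset.univ.filter fun k => k ≠ j, |M j k|) }

/-- `cs_j(A)` from Definition 2.3: sorted column sums difference. -/
noncomputable def csCol {n : ℕ} (A : Matrix (Fin n) (Fin n) ℝ) (j : Fin n) : ℝ :=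
  halfSumDiff n (sortDesc (List.ofFn fun i : Fin n => A i j))




namespace Stmt14Aux

variable {m : ℕ}

/-- change of basis matrix: columns `e_j - e_last` for `j < last`, `e_last` for `j = last`. -/
noncomputable def Pm (m : ℕ) : Matrix (Fin (m+1)) (Fin (m+1)) ℝ := fun i j =>
  if j = Fin.last m then (if i = Fin.last m then 1 else 0)
  else (if i = j then (1:ℝ) else 0) + (if i = Fin.last m then -1 else 0)

noncomputable def Qm (m : ℕ) : Matrix (Fin (m+1)) (Fin (m+1)) ℝ := fun i j =>
  if i = Fin.last m then 1 else if i = j then 1 else 0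

lemma colsum_P (j : Fin (m+1)) : ∑ i, Pm m i j = if j = Fin.last m then 1 else 0 := by
  by_cases hj : j = Fin.last m
  · simp [Pm, hj]
  · simp [Pm, hj, Finset.sum_add_distrib]

lemma QP : Qm m * Pm m = 1 := by
  ext i j
  rw [Matrix.mul_apply, Matrix.one_apply]
  by_cases hi : i = Fin.last m
  · subst hi
    have : ∀ l, Qm m (Fin.last m) l * Pm m l j = Pm m l j := by
      intro l; simp [Qm]
    rw [Finset.sum_congr rfl fun l _ => this l, colsum_P]
    by_cases hj : j = Fin.last m <;> simp [hj, eq_comm]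
  · have : ∀ l, Qm m i l * Pm m l j = (if i = l then 1 else 0) * Pm m l j := by
      intro l; simp [Qm, hi]
    rw [Finset.sum_congr rfl fun l _ => this l]
    simp only [ite_mul, one_mul, zero_mul, Finset.sum_ite_eq, Finset.mem_univ, if_true]
    by_cases hj : j = Fin.last m
    · simp [Pm, hj, hi]
    · simp [Pm, hj, hi]

lemma PQ : Pm m * Qm m = 1 := mul_eq_one_comm.mp QP

/-- last row of `N` is `(0,...,0,c)` -/
def LastRowP (N : Matrix (Fin (m+1)) (Fin (m+1)) ℝ) (c : ℝ) : Prop :=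
  ∀ j, N (Fin.last m) j = if j = Fin.last m then c else 0

lemma lastRow_conj {M : Matrix (Fin (m+1)) (Fin (m+1)) ℝ} {c : ℝ}
    (hM : ∀ j, ∑ i, M i j = c) : LastRowP (Qm m * M * Pm m) c := by
  intro j
  rw [Matrix.mul_apply]
  have h1 : ∀ l, (Qm m * M) (Fin.last m) l = c := by
    intro l
    rw [Matrix.mul_apply]
    have : ∀ t, Qm m (Fin.last m) t * M t l = M t l := by intro t; simp [Qm]
    rw [Finset.sum_congr rfl fun t _ => this t, hM]
  calc ∑ l, (Qm m * M) (Fin.last m) l * Pm m l j = ∑ l, c * Pm m l j := by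
        exact Finset.sum_congr rfl fun l _ => by rw [h1]
    _ = c * ∑ l, Pm m l j := by rw [Finset.mul_sum]
    _ = if j = Fin.last m then c else 0 := by
        rw [colsum_P]; by_cases hj : j = Fin.last m <;> simp [hj]

lemma det_lastRow {N : Matrix (Fin (m+1)) (Fin (m+1)) ℝ} {c : ℝ} (hN : LastRowP N c) :
    N.det = c * (N.submatrix Fin.castSucc Fin.castSucc).det := by
  rw [Matrix.det_succ_row N (Fin.last m)]
  rw [Finset.sum_eq_single (Fin.last m)]
  · rw [hN]
    simp [Fin.succAbove_last, pow_add, mul_comm, ← mul_pow]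
  · intro j _ hj
    rw [hN j, if_neg hj]; ring
  · simp

lemma lastRow_mul {N₁ N₂ : Matrix (Fin (m+1)) (Fin (m+1)) ℝ} {c₁ c₂ : ℝ}
    (h₁ : LastRowP N₁ c₁) (h₂ : LastRowP N₂ c₂) : LastRowP (N₁ * N₂) (c₁ * c₂) := by
  intro j
  rw [Matrix.mul_apply]
  rw [Finset.sum_eq_single (Fin.last m)]
  · rw [h₁, h₂, if_pos rfl]
    by_cases hj : j = Fin.last m <;> simp [hj]
  · intro l _ hl; rw [h₁, if_neg hl]; ring
  · simp

lemma minor_mul {N₁ N₂ : Matrix (Fin (m+1)) (Fin (m+1)) ℝ} {c₂ : ℝ}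
    (h₂ : LastRowP N₂ c₂) :
    (N₁ * N₂).submatrix Fin.castSucc Fin.castSucc =
      (N₁.submatrix Fin.castSucc Fin.castSucc) * (N₂.submatrix Fin.castSucc Fin.castSucc) := by
  ext i j
  rw [Matrix.submatrix_apply, Matrix.mul_apply, Matrix.mul_apply]
  rw [Fin.sum_univ_castSucc]
  have : N₂ (Fin.last m) (Fin.castSucc j) = 0 := by
    rw [h₂, if_neg (Fin.castSucc_lt_last j).ne]
  simp [this]

lemma lastRow_pow {N : Matrix (Fin (m+1)) (Fin (m+1)) ℝ} {c : ℝ} (h : LastRowP N c) (k : ℕ) :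
    LastRowP (N ^ k) (c ^ k) ∧
      (N ^ k).submatrix Fin.castSucc Fin.castSucc =
        (N.submatrix Fin.castSucc Fin.castSucc) ^ k := by
  induction k with
  | zero =>
      constructor
      · intro j
        simp [Matrix.one_apply, eq_comm]
      · ext i j
        simp [Matrix.one_apply, Fin.castSucc_injective m |>.eq_iff]
  | succ k ih =>
      constructor
      · rw [pow_succ, pow_succ]
        exact lastRow_mul ih.1 h
      · rw [pow_succ, pow_succ, minor_mul h, ih.2]

lemma conj_pow (M : Matrix (Fin (m+1)) (Fin (m+1)) ℝ) (k : ℕ) :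
    (Qm m * M * Pm m) ^ k = Qm m * M ^ k * Pm m := by
  induction k with
  | zero => simp [QP]
  | succ k ih =>
      rw [pow_succ, ih]
      calc Qm m * M ^ k * Pm m * (Qm m * M * Pm m)
          = Qm m * M ^ k * (Pm m * Qm m) * M * Pm m := by
            simp only [Matrix.mul_assoc]
        _ = Qm m * M ^ (k+1) * Pm m := by rw [PQ, Matrix.mul_one, pow_succ]; simp only [Matrix.mul_assoc]

lemma column_formula {M : Matrix (Fin (m+1)) (Fin (m+1)) ℝ} {c : ℝ}
    (h : LastRowP (Qm m * M * Pm m) c) (j : Fin m) :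
    M *ᵥ (fun i => Pm m i (Fin.castSucc j)) =
      ∑ l : Fin m, ((Qm m * M * Pm m).submatrix Fin.castSucc Fin.castSucc) l j •
        (fun i => Pm m i (Fin.castSucc l)) := by
  have hMP : M * Pm m = Pm m * (Qm m * M * Pm m) := by
    calc M * Pm m = (Pm m * Qm m) * M * Pm m := by rw [PQ, Matrix.one_mul]
      _ = Pm m * (Qm m * M * Pm m) := by simp only [Matrix.mul_assoc]
  funext i
  have h1 : (M *ᵥ fun i => Pm m i (Fin.castSucc j)) i = (M * Pm m) i (Fin.castSucc j) := by
    rw [Matrix.mul_apply, Matrix.mulVec, dotProduct]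
  rw [h1, hMP, Matrix.mul_apply, Fin.sum_univ_castSucc]
  have h0 : (Qm m * M * Pm m) (Fin.last m) (Fin.castSucc j) = 0 := by
    rw [h, if_neg (Fin.castSucc_lt_last j).ne]
  rw [h0, mul_zero, add_zero]
  rw [Finset.sum_apply]
  exact Finset.sum_congr rfl fun l _ => by
    simp [Matrix.submatrix_apply, mul_comm]




lemma le_of_pow_le_C_mul_pow {a b C : ℝ} (ha : 0 ≤ a) (hb : 0 ≤ b) (hC : 0 < C)
    (h : ∀ k : ℕ, 1 ≤ k → a ^ k ≤ C * b ^ k) : a ≤ b := by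
  by_contra hab
  push_neg at hab
  rcases eq_or_lt_of_le hb with hb0 | hb0
  · have := h 1 le_rfl
    simp [← hb0] at this
    nlinarith
  · have h1 : 1 < a / b := (one_lt_div hb0).mpr hab
    have htend := tendsto_pow_atTop_atTop_of_one_lt h1
    obtain ⟨k, hk⟩ := ((htend.eventually_gt_atTop C).and (Filter.eventually_ge_atTop 1)).exists
    have hle : (a / b) ^ k ≤ C := by
      rw [div_pow, div_le_iff₀ (pow_pos hb0 k)]
      exact h k hk.2
    exact absurd hle (not_le.mpr hk.1)

theorem abs_det_le_opNorm_pow {E : Type*} [NormedAddCommGroup E] [NormedSpace ℝ E]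
    [FiniteDimensional ℝ E] (T : E →L[ℝ] E) :
    |LinearMap.det (T : E →ₗ[ℝ] E)| ≤ ‖T‖ ^ (Module.finrank ℝ E) := by
  classical
  set d := Module.finrank ℝ E with hd
  -- a uniform polynomial bound
  obtain ⟨C, hC0, hC⟩ : ∃ C : ℝ, 0 < C ∧ ∀ S : E →L[ℝ] E,
      |LinearMap.det (S : E →ₗ[ℝ] E)| ≤ C * ‖S‖ ^ d := by
    set b := Module.finBasis ℝ E with hb
    set c0 : ℝ := (∑ i, ‖LinearMap.toContinuousLinearMap (b.coord i)‖) * (∑ j, ‖b j‖) with hc0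
    have hc0n : 0 ≤ c0 := by
      apply mul_nonneg <;> exact Finset.sum_nonneg fun _ _ => norm_nonneg _
    refine ⟨(Nat.factorial d : ℝ) * (c0 + 1) ^ d, by positivity, fun S => ?_⟩
    have hdet : LinearMap.det (S : E →ₗ[ℝ] E) = (LinearMap.toMatrix b b (S : E →ₗ[ℝ] E)).det := by
      rw [← LinearMap.det_toMatrix b]
    have hentry : ∀ i j, |(LinearMap.toMatrix b b (S : E →ₗ[ℝ] E)) i j| ≤ (c0 + 1) * ‖S‖ := by
      intro i j
      rw [LinearMap.toMatrix_apply]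
      have hSb : ((S : E →ₗ[ℝ] E) (b j)) = S (b j) := rfl
      rw [hSb]
      have h1 : |b.repr (S (b j)) i| = ‖LinearMap.toContinuousLinearMap (b.coord i) (S (b j))‖ := by
        simp [LinearMap.coe_toContinuousLinearMap', Module.Basis.coord_apply, Real.norm_eq_abs]
      rw [h1]
      calc ‖LinearMap.toContinuousLinearMap (b.coord i) (S (b j))‖
          ≤ ‖LinearMap.toContinuousLinearMap (b.coord i)‖ * ‖S (b j)‖ :=
            ContinuousLinearMap.le_opNorm _ _
        _ ≤ ‖LinearMap.toContinuousLinearMap (b.coord i)‖ * (‖S‖ * ‖b j‖) := by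
            exact mul_le_mul_of_nonneg_left (S.le_opNorm _) (norm_nonneg _)
        _ ≤ c0 * ‖S‖ := by
            rw [hc0]
            have hi : ‖LinearMap.toContinuousLinearMap (b.coord i)‖ ≤
                ∑ i', ‖LinearMap.toContinuousLinearMap (b.coord i')‖ :=
              Finset.single_le_sum
                (f := fun i' => ‖LinearMap.toContinuousLinearMap (b.coord i')‖)
                (fun _ _ => norm_nonneg _) (Finset.mem_univ i)
            have hj : ‖b j‖ ≤ ∑ j', ‖b j'‖ :=
              Finset.single_le_sum (f := fun j' => ‖b j'‖)
                (fun _ _ => norm_nonneg _) (Finset.mem_univ j)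
            have hmul : ‖LinearMap.toContinuousLinearMap (b.coord i)‖ * ‖b j‖ ≤
                (∑ i', ‖LinearMap.toContinuousLinearMap (b.coord i')‖) * (∑ j', ‖b j'‖) :=
              mul_le_mul hi hj (norm_nonneg _)
                (Finset.sum_nonneg fun _ _ => norm_nonneg _)
            nlinarith [norm_nonneg S, hmul, norm_nonneg (b j),
              norm_nonneg (LinearMap.toContinuousLinearMap (b.coord i))]
        _ ≤ (c0 + 1) * ‖S‖ := by nlinarith [norm_nonneg S]
    have hdl : |(LinearMap.toMatrix b b (S : E →ₗ[ℝ] E)).det| ≤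
        Nat.factorial (Fintype.card (Fin d)) • ((c0 + 1) * ‖S‖) ^ Fintype.card (Fin d) :=
      Matrix.det_le (abv := (AbsoluteValue.abs : AbsoluteValue ℝ ℝ)) hentry
    rw [hdet]
    calc |(LinearMap.toMatrix b b (S : E →ₗ[ℝ] E)).det|
        ≤ Nat.factorial (Fintype.card (Fin d)) • ((c0 + 1) * ‖S‖) ^ Fintype.card (Fin d) := hdl
      _ = (Nat.factorial d : ℝ) * ((c0 + 1) ^ d * ‖S‖ ^ d) := by
          simp [nsmul_eq_mul, mul_pow]
      _ = (Nat.factorial d : ℝ) * (c0 + 1) ^ d * ‖S‖ ^ d := by ring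
  -- the iteration trick
  have hpow : ∀ k : ℕ, ((T ^ k : E →L[ℝ] E) : E →ₗ[ℝ] E) = ((T : E →ₗ[ℝ] E)) ^ k := by
    intro k
    induction k with
    | zero => rfl
    | succ k ih => rw [pow_succ, pow_succ, ← ih]; rfl
  apply le_of_pow_le_C_mul_pow (abs_nonneg _) (by positivity) hC0
  intro k hk
  have h1 : |LinearMap.det (T : E →ₗ[ℝ] E)| ^ k = |LinearMap.det ((T ^ k : E →L[ℝ] E) : E →ₗ[ℝ] E)| := by
    rw [hpow k, MonoidHom.map_pow, abs_pow]
  have h2 : ‖(T ^ k : E →L[ℝ] E)‖ ≤ ‖T‖ ^ k := norm_pow_le' T (by omega)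
  calc |LinearMap.det (T : E →ₗ[ℝ] E)| ^ k
      = |LinearMap.det ((T ^ k : E →L[ℝ] E) : E →ₗ[ℝ] E)| := h1
    _ ≤ C * ‖(T ^ k : E →L[ℝ] E)‖ ^ d := hC _
    _ ≤ C * (‖T‖ ^ k) ^ d := by
        apply mul_le_mul_of_nonneg_left _ hC0.le
        exact pow_le_pow_left₀ (norm_nonneg _) h2 d
    _ = C * (‖T‖ ^ d) ^ k := by rw [← pow_mul, ← pow_mul, Nat.mul_comm]


end Stmt14Aux

namespace Stmt14Aux

noncomputable def fL {n : ℕ} (p : ℝ≥0∞) (M : Matrix (Fin n) (Fin n) ℝ) :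
    PiLp p (fun _ : Fin n => ℝ) →ₗ[ℝ] PiLp p (fun _ : Fin n => ℝ) where
  toFun := fun x => WithLp.toLp p (M *ᵥ x)
  map_add' := fun x y => by simp [Matrix.mulVec_add]
  map_smul' := fun c x => by simp [Matrix.mulVec_smul]

end Stmt14Aux

set_option maxHeartbeats 1000000 in
/-- Corollary 4: if `A v = λ v` with all components of `v` nonzero and
`D = diag v`, then `|det A| ≤ |λ| · (τ_p(D⁻¹ A^k D))^{(n-1)/k}` for every admissible
`p` and every positive integer `k`; in particular
`|det A| ≤ |λ| · τ_p(D⁻¹ A^{n-1} D)`. -/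
theorem stmt14 {n : ℕ} (hn : 2 ≤ n) (A : Matrix (Fin n) (Fin n) ℝ)
    (lam : ℝ) (v : Fin n → ℝ) (hv : ∀ i, v i ≠ 0) (hAv : A *ᵥ v = lam • v)
    (D : Matrix (Fin n) (Fin n) ℝ) (hD : D = Matrix.diagonal v)
    (p : ℝ≥0∞) (hp : 1 ≤ p) (hp' : p = ⊤ ∨ ∃ m : ℕ, p = m) :
    (∀ k : ℕ, 0 < k →
        |A.det| ≤ |lam| * (tau p (D⁻¹ * A ^ k * D)) ^ (((n : ℝ) - 1) / k)) ∧
      |A.det| ≤ |lam| * tau p (D⁻¹ * A ^ (n - 1) * D) := by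
  classical
  open Stmt14Aux in
  obtain ⟨m, rfl⟩ : ∃ m, n = m + 1 := ⟨n - 1, by omega⟩
  have hm : 1 ≤ m := by omega
  haveI : Fact (1 ≤ p) := ⟨hp⟩
  haveI : FiniteDimensional ℝ (PiLp p (fun _ : Fin (m+1) => ℝ)) :=
    Module.Finite.of_basis (PiLp.basisFun p ℝ (Fin (m+1)))
  -- basic facts about D
  have hDdet : IsUnit D.det := by
    rw [hD, Matrix.det_diagonal]
    exact isUnit_iff_ne_zero.mpr (Finset.prod_ne_zero_iff.mpr fun i _ => hv i)
  have hDinv : D⁻¹ = Matrix.diagonal (fun i => (v i)⁻¹) := by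
    apply Matrix.inv_eq_right_inv
    rw [hD, Matrix.diagonal_mul_diagonal]
    have hfun : (fun i => v i * (v i)⁻¹) = fun _ => (1:ℝ) :=
      funext fun i => mul_inv_cancel₀ (hv i)
    rw [hfun, Matrix.diagonal_one]
  have hDDi : D * D⁻¹ = 1 := Matrix.mul_nonsing_inv D hDdet
  have hDiD : D⁻¹ * D = 1 := Matrix.nonsing_inv_mul D hDdet
  set B : Matrix (Fin (m+1)) (Fin (m+1)) ℝ := D⁻¹ * A * D with hB
  have hBk : ∀ k : ℕ, D⁻¹ * A ^ k * D = B ^ k := by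
    intro k
    induction k with
    | zero => rw [pow_zero, pow_zero, Matrix.mul_one, hDiD]
    | succ k ih =>
        conv_rhs => rw [pow_succ, ← ih]
        rw [pow_succ]
        calc D⁻¹ * (A ^ k * A) * D = D⁻¹ * A ^ k * (D * D⁻¹) * A * D := by
              rw [hDDi, Matrix.mul_one]; simp only [Matrix.mul_assoc]
          _ = D⁻¹ * A ^ k * D * (D⁻¹ * A * D) := by simp only [Matrix.mul_assoc]
  have hdetB : B.det = A.det := by
    have h1 : D⁻¹.det * D.det = 1 := by rw [← Matrix.det_mul, hDiD, Matrix.det_one]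
    rw [hB, Matrix.det_mul, Matrix.det_mul]
    linear_combination A.det * h1
  set M : Matrix (Fin (m+1)) (Fin (m+1)) ℝ := Bᵀ with hM
  have hMk : ∀ k : ℕ, (D⁻¹ * A ^ k * D)ᵀ = M ^ k := by
    intro k
    rw [hBk k, hM, Matrix.transpose_pow]
  -- column sums of M are lam
  have hB1 : B *ᵥ (fun _ => (1:ℝ)) = fun _ => lam := by
    have hD1 : D *ᵥ (fun _ => (1:ℝ)) = v := by
      funext i
      rw [hD]
      simp [Matrix.mulVec, dotProduct, Matrix.diagonal]
    have hDv : D⁻¹ *ᵥ v = fun _ => (1:ℝ) := by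
      funext i
      rw [hDinv]
      simp [Matrix.mulVec, dotProduct, Matrix.diagonal]
      exact inv_mul_cancel₀ (hv i)
    calc B *ᵥ (fun _ => (1:ℝ)) = D⁻¹ *ᵥ (A *ᵥ (D *ᵥ (fun _ => (1:ℝ)))) := by
          rw [hB, Matrix.mulVec_mulVec, Matrix.mulVec_mulVec]
      _ = D⁻¹ *ᵥ (lam • v) := by rw [hD1, hAv]
      _ = lam • (D⁻¹ *ᵥ v) := by rw [Matrix.mulVec_smul]
      _ = fun _ => lam := by rw [hDv]; funext i; simp
  have hcolM : ∀ j, ∑ i, M i j = lam := by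
    intro j
    have := congrFun hB1 j
    simp only [Matrix.mulVec, dotProduct, mul_one] at this
    simpa [hM, Matrix.transpose_apply] using this
  have hcolMk : ∀ k : ℕ, ∀ j, ∑ i, (M ^ k) i j = lam ^ k := by
    intro k
    induction k with
    | zero => intro j; simp [Matrix.one_apply, Finset.sum_ite_eq]
    | succ k ih =>
        intro j
        rw [pow_succ]
        calc ∑ i, (M ^ k * M) i j = ∑ i, ∑ l, (M ^ k) i l * M l j := by
              simp [Matrix.mul_apply]
          _ = ∑ l, (∑ i, (M ^ k) i l) * M l j := by
              rw [Finset.sum_comm]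
              exact Finset.sum_congr rfl fun l _ => by rw [Finset.sum_mul]
          _ = ∑ l, lam ^ k * M l j := Finset.sum_congr rfl fun l _ => by rw [ih l]
          _ = lam ^ k * lam := by rw [← Finset.mul_sum, hcolM j]
          _ = lam ^ (k+1) := by rw [pow_succ]
  have hlastN : LastRowP (Qm m * M * Pm m) lam := lastRow_conj hcolM
  set N' : Matrix (Fin m) (Fin m) ℝ :=
    (Qm m * M * Pm m).submatrix Fin.castSucc Fin.castSucc with hN'
  have hdetA : A.det = lam * N'.det := by
    have hQPdet : (Qm m).det * (Pm m).det = 1 := by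
      rw [← Matrix.det_mul, QP, Matrix.det_one]
    have h2 : (Qm m * M * Pm m).det = M.det := by
      rw [Matrix.det_mul, Matrix.det_mul]
      linear_combination M.det * hQPdet
    have h3 : M.det = A.det := by rw [hM, Matrix.det_transpose, hdetB]
    rw [← h3, ← h2, det_lastRow hlastN, hN']
  -- the subspace W and its basis
  set sumφ : PiLp p (fun _ : Fin (m+1) => ℝ) →ₗ[ℝ] ℝ :=
    { toFun := fun x => ∑ i, x i
      map_add' := fun x y => by simp [Finset.sum_add_distrib]
      map_smul' := fun c x => by simp [Finset.mul_sum] } with hsumφ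
  set W : Submodule ℝ (PiLp p (fun _ : Fin (m+1) => ℝ)) := LinearMap.ker sumφ with hW
  have hmemW : ∀ x : PiLp p (fun _ : Fin (m+1) => ℝ), x ∈ W ↔ ∑ i, x i = 0 := by
    intro x
    rw [hW, LinearMap.mem_ker]
    rfl
  set u : Fin m → (PiLp p (fun _ : Fin (m+1) => ℝ)) :=
    fun j => WithLp.toLp p (fun i => Pm m i (Fin.castSucc j)) with hu
  have husum : ∀ j, ∑ i : Fin (m+1), u j i = 0 := by
    intro j
    have := colsum_P (m := m) (Fin.castSucc j)
    rw [if_neg (Fin.castSucc_lt_last j).ne] at this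
    exact this
  set uW : Fin m → W := fun j => ⟨u j, (hmemW _).mpr (husum j)⟩ with huW
  have hval : ∀ (c : Fin m → ℝ),
      ((∑ j, c j • uW j : W) : PiLp p (fun _ : Fin (m+1) => ℝ)) = ∑ j, c j • u j := by
    intro c
    have := congrArg W.subtype (rfl : (∑ j, c j • uW j : W) = ∑ j, c j • uW j)
    rw [Submodule.coe_sum]
    rfl
  have heval : ∀ (c : Fin m → ℝ) (i : Fin (m+1)),
      (∑ j, c j • u j) i = ∑ j, c j * u j i := by
    intro c i
    simp [Finset.sum_apply]
  have hu_eval_cs : ∀ (j : Fin m) (i : Fin m),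
      u j (Fin.castSucc i) = if i = j then 1 else 0 := by
    intro j i
    show Pm m (Fin.castSucc i) (Fin.castSucc j) = _
    rw [Pm, if_neg (Fin.castSucc_lt_last j).ne, if_neg (Fin.castSucc_lt_last i).ne]
    by_cases h : i = j
    · simp [h]
    · simp [h, fun hc => h (Fin.castSucc_injective m hc)]
  have hu_eval_last : ∀ (j : Fin m), u j (Fin.last m) = -1 := by
    intro j
    show Pm m (Fin.last m) (Fin.castSucc j) = -1
    rw [Pm, if_neg (Fin.castSucc_lt_last j).ne,
      if_neg (Fin.castSucc_lt_last j).ne', if_pos rfl]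
    norm_num
  have hindep : LinearIndependent ℝ uW := by
    rw [Fintype.linearIndependent_iff]
    intro g hg i
    have h0 : (∑ j, g j • u j) = (0 : PiLp p (fun _ : Fin (m+1) => ℝ)) := by
      rw [← hval g, hg]
      rfl
    have := congrFun (congrArg WithLp.ofLp h0) (Fin.castSucc i)
    rw [heval] at this
    simp only [hu_eval_cs, mul_ite, mul_one, mul_zero, Finset.sum_ite_eq,
      Finset.sum_ite_eq', Finset.mem_univ, if_true] at this
    simpa using this
  have hspan : ⊤ ≤ Submodule.span ℝ (Set.range uW) := by
    intro x _
    have hx : x = ∑ j, ((x : PiLp p (fun _ : Fin (m+1) => ℝ)) (Fin.castSucc j)) • uW j := by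
      apply Subtype.ext
      rw [hval]
      ext i
      rw [heval]
      induction i using Fin.lastCases with
      | last =>
          have hsum0 : ∑ i, (x : PiLp p (fun _ : Fin (m+1) => ℝ)) i = 0 := (hmemW _).mp x.2
          rw [Fin.sum_univ_castSucc] at hsum0
          simp only [hu_eval_last, mul_neg, mul_one]
          rw [Finset.sum_neg_distrib]
          linarith [hsum0]
      | cast i =>
          simp only [hu_eval_cs, mul_ite, mul_one, mul_zero, Finset.sum_ite_eq,
            Finset.sum_ite_eq', Finset.mem_univ, if_true]
    rw [hx]
    exact Submodule.sum_mem _ fun j _ =>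
      Submodule.smul_mem _ _ (Submodule.subset_span ⟨j, rfl⟩)
  set bW : Module.Basis (Fin m) ℝ W := Module.Basis.mk hindep hspan with hbW
  have hfrW : Module.finrank ℝ W = m := by
    rw [Module.finrank_eq_card_basis bW, Fintype.card_fin]
  -- main estimate for each k ≥ 1
  have key : ∀ k : ℕ, 1 ≤ k →
      0 ≤ tau p (D⁻¹ * A ^ k * D) ∧
        |N'.det| ^ k ≤ (tau p (D⁻¹ * A ^ k * D)) ^ m := by
    intro k hk
    set Bk : Matrix (Fin (m+1)) (Fin (m+1)) ℝ := D⁻¹ * A ^ k * D with hBkdef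
    have hBkM : Bkᵀ = M ^ k := hMk k
    set S : Set ℝ := { t : ℝ | ∃ x : Fin (m+1) → ℝ,
      (∑ i, x i) = 0 ∧ lpNorm p x = 1 ∧ t = lpNorm p (Bkᵀ *ᵥ x) } with hS
    have htauS : tau p Bk = sSup S := rfl
    set gC : PiLp p (fun _ : Fin (m+1) => ℝ) →L[ℝ] PiLp p (fun _ : Fin (m+1) => ℝ) :=
      LinearMap.toContinuousLinearMap (fL p (M ^ k)) with hgC
    have hgC_apply : ∀ x : PiLp p (fun _ : Fin (m+1) => ℝ), gC x = (M ^ k) *ᵥ x := by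
      intro x; rfl
    have hlp_norm : ∀ x : PiLp p (fun _ : Fin (m+1) => ℝ), lpNorm p x = ‖x‖ := fun _ => rfl
    have hbdd : BddAbove S := by
      refine ⟨‖gC‖, fun t ht => ?_⟩
      obtain ⟨x, hx0, hx1, hxt⟩ := ht
      have : t = ‖gC ((WithLp.equiv p (∀ _ : Fin (m+1), ℝ)).symm x)‖ := by
        rw [hxt, hBkM]
        rfl
      rw [this]
      calc ‖gC ((WithLp.equiv p (∀ _ : Fin (m+1), ℝ)).symm x)‖
          ≤ ‖gC‖ * ‖(WithLp.equiv p (∀ _ : Fin (m+1), ℝ)).symm x‖ := gC.le_opNorm _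
        _ = ‖gC‖ := by
            rw [show ‖(WithLp.equiv p (∀ _ : Fin (m+1), ℝ)).symm x‖ = lpNorm p x from rfl,
              hx1, mul_one]
    -- tau is nonnegative
    have hmemS : ∀ y : PiLp p (fun _ : Fin (m+1) => ℝ), (∑ i, y i) = 0 → ‖y‖ = 1 →
        ‖gC y‖ ∈ S := by
      intro y hy0 hy1
      exact ⟨y, hy0, hy1, by rw [hBkM]; rfl⟩
    have htau0 : 0 ≤ tau p Bk := by
      set y0 : PiLp p (fun _ : Fin (m+1) => ℝ) := u ⟨0, hm⟩ with hy0
      have hy0ne : y0 ≠ 0 := by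
        intro hzero
        have h1 : y0 (Fin.castSucc ⟨0, hm⟩) = 1 := by
          rw [hy0, hu_eval_cs]
          simp
        rw [hzero] at h1
        have h2 : (0 : PiLp p (fun _ : Fin (m+1) => ℝ)) (Fin.castSucc ⟨0, hm⟩) = 0 := rfl
        rw [h2] at h1
        exact zero_ne_one h1
      have hny0 : ‖y0‖ ≠ 0 := norm_ne_zero_iff.mpr hy0ne
      set z : PiLp p (fun _ : Fin (m+1) => ℝ) := ‖y0‖⁻¹ • y0 with hz
      have hz0 : ∑ i, z i = 0 := by
        have : ∀ i, z i = ‖y0‖⁻¹ * y0 i := fun i => rfl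
        simp only [this, ← Finset.mul_sum, hy0, husum, mul_zero]
      have hz1 : ‖z‖ = 1 := by
        rw [hz, norm_smul, norm_inv, Real.norm_eq_abs, abs_of_nonneg (norm_nonneg _)]
        exact inv_mul_cancel₀ hny0
      have hmem := hmemS z hz0 hz1
      calc (0:ℝ) ≤ ‖gC z‖ := norm_nonneg _
        _ ≤ tau p Bk := le_csSup hbdd hmem
    -- the restricted operator
    have hWinv : ∀ x ∈ W, fL p (M ^ k) x ∈ W := by
      intro x hx
      rw [hmemW] at hx ⊢
      show ∑ i, ((M ^ k) *ᵥ x) i = 0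
      calc ∑ i, ((M ^ k) *ᵥ x) i = ∑ i, ∑ j, (M ^ k) i j * x j := by
            simp [Matrix.mulVec, dotProduct]
        _ = ∑ j, (∑ i, (M ^ k) i j) * x j := by
            rw [Finset.sum_comm]
            exact Finset.sum_congr rfl fun j _ => by rw [Finset.sum_mul]
        _ = ∑ j, lam ^ k * x j := Finset.sum_congr rfl fun j _ => by rw [hcolMk k j]
        _ = lam ^ k * ∑ j, x j := by rw [Finset.mul_sum]
        _ = 0 := by rw [hx, mul_zero]
    set TL : W →ₗ[ℝ] W := (fL p (M ^ k)).restrict hWinv with hTL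
    set TC : W →L[ℝ] W := LinearMap.toContinuousLinearMap TL with hTC
    -- TL has matrix N' ^ k in the basis bW
    have hlast_k : LastRowP (Qm m * M ^ k * Pm m) (lam ^ k) := by
      rw [← Stmt14Aux.conj_pow]
      exact (lastRow_pow hlastN k).1
    have hminor_k : (Qm m * M ^ k * Pm m).submatrix Fin.castSucc Fin.castSucc = N' ^ k := by
      rw [← Stmt14Aux.conj_pow, (lastRow_pow hlastN k).2, hN']
    have hTb : ∀ j, TL (bW j) = ∑ l, (N' ^ k) l j • bW l := by
      intro j
      apply Subtype.ext
      have hcoe : ((TL (bW j) : W) : PiLp p (fun _ : Fin (m+1) => ℝ)) = WithLp.toLp p ((M ^ k) *ᵥ (u j)) := by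
        rw [hbW, Module.Basis.mk_apply]
        rfl
      rw [hcoe]
      have hrhs : ((∑ l, (N' ^ k) l j • bW l : W) : PiLp p (fun _ : Fin (m+1) => ℝ))
          = ∑ l, (N' ^ k) l j • u l := by
        have := hval (fun l => (N' ^ k) l j)
        simp only [hbW, Module.Basis.coe_mk] at this ⊢
        exact this
      rw [hrhs]
      have hcf := column_formula hlast_k j
      rw [hminor_k] at hcf
      ext i
      rw [heval]
      have := congrFun hcf i
      rw [Finset.sum_apply] at this
      exact this
    have hTLeq : TL = Matrix.toLin bW bW (N' ^ k) := by
      apply bW.ext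
      intro j
      rw [Matrix.toLin_self, hTb j]
    have hdetTL : LinearMap.det TL = (N' ^ k).det := by
      rw [hTLeq, LinearMap.det_toLin]
    -- operator norm bound
    have hnormT : ‖TC‖ ≤ tau p Bk := by
      apply ContinuousLinearMap.opNorm_le_bound TC htau0
      intro x
      rcases eq_or_ne x 0 with hx | hx
      · simp [hx]
      · have hxv : (x : PiLp p (fun _ : Fin (m+1) => ℝ)) ≠ 0 := by
          simpa [Submodule.coe_eq_zero] using hx
        have hnx : ‖x‖ ≠ 0 := norm_ne_zero_iff.mpr hx
        set z : PiLp p (fun _ : Fin (m+1) => ℝ) := ‖x‖⁻¹ • (x : PiLp p (fun _ : Fin (m+1) => ℝ)) with hz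
        have hz0 : ∑ i, z i = 0 := by
          have hx0 : ∑ i, (x : PiLp p (fun _ : Fin (m+1) => ℝ)) i = 0 := (hmemW _).mp x.2
          have : ∀ i, z i = ‖x‖⁻¹ * (x : PiLp p (fun _ : Fin (m+1) => ℝ)) i := fun i => rfl
          simp only [this, ← Finset.mul_sum, hx0, mul_zero]
        have hz1 : ‖z‖ = 1 := by
          rw [hz, norm_smul, norm_inv, Real.norm_eq_abs, abs_of_nonneg (norm_nonneg _)]
          have : ‖(x : PiLp p (fun _ : Fin (m+1) => ℝ))‖ = ‖x‖ := rfl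
          rw [this]
          exact inv_mul_cancel₀ hnx
        have hmem := hmemS z hz0 hz1
        have hzle : ‖gC z‖ ≤ tau p Bk := le_csSup hbdd hmem
        have hTCx : ((TC x : W) : PiLp p (fun _ : Fin (m+1) => ℝ))
            = gC (x : PiLp p (fun _ : Fin (m+1) => ℝ)) := by
          have h1 : TC x = TL x := congrFun (LinearMap.coe_toContinuousLinearMap' TL) x
          have h2 : gC (x : PiLp p (fun _ : Fin (m+1) => ℝ))
              = fL p (M ^ k) (x : PiLp p (fun _ : Fin (m+1) => ℝ)) :=
            congrFun (LinearMap.coe_toContinuousLinearMap' (fL p (M ^ k))) _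
          rw [h1, h2]
          rfl
        have hsplit : gC (x : PiLp p (fun _ : Fin (m+1) => ℝ)) = ‖x‖ • gC z := by
          rw [hz, _root_.map_smul, smul_smul, mul_inv_cancel₀ hnx, one_smul]
        have hnTCx : ‖TC x‖ = ‖gC (x : PiLp p (fun _ : Fin (m+1) => ℝ))‖ := by
          rw [← hTCx, Submodule.coe_norm]
        rw [hnTCx, hsplit, norm_smul, Real.norm_eq_abs, abs_of_nonneg (norm_nonneg _)]
        rw [mul_comm]
        exact mul_le_mul_of_nonneg_right hzle (norm_nonneg _)
    -- combine
    refine ⟨htau0, ?_⟩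
    have hdet1 : |N'.det| ^ k = |(N' ^ k).det| := by
      rw [Matrix.det_pow, abs_pow]
    have hdet2 : |(N' ^ k).det| ≤ ‖TC‖ ^ m := by
      have := abs_det_le_opNorm_pow TC
      rw [hfrW] at this
      have hcoe : ((TC : W →L[ℝ] W) : W →ₗ[ℝ] W) = TL := by
        rw [hTC]
        exact LinearMap.coe_toContinuousLinearMap TL
      rw [hcoe, hdetTL] at this
      exact this
    calc |N'.det| ^ k = |(N' ^ k).det| := hdet1
      _ ≤ ‖TC‖ ^ m := hdet2
      _ ≤ (tau p Bk) ^ m := pow_le_pow_left₀ (ContinuousLinearMap.opNorm_nonneg TC) hnormT m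
  -- conclude
  have part1 : ∀ k : ℕ, 0 < k →
      |A.det| ≤ |lam| * (tau p (D⁻¹ * A ^ k * D)) ^ ((((m+1:ℕ):ℝ) - 1) / (k:ℝ)) := by
    intro k hk
    obtain ⟨htau0, hpowle⟩ := key k hk
    have hkR : ((k:ℝ)) ≠ 0 := Nat.cast_ne_zero.mpr hk.ne'
    have h1 : |N'.det| ≤ (tau p (D⁻¹ * A ^ k * D)) ^ ((m:ℝ) / (k:ℝ)) := by
      have h2 := Real.rpow_le_rpow (by positivity) hpowle (by positivity : (0:ℝ) ≤ (k:ℝ)⁻¹)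
      rw [← Real.rpow_natCast (|N'.det|) k, ← Real.rpow_natCast (tau p (D⁻¹ * A ^ k * D)) m,
        ← Real.rpow_mul (abs_nonneg _), ← Real.rpow_mul htau0,
        mul_inv_cancel₀ hkR, Real.rpow_one] at h2
      rw [div_eq_mul_inv]
      exact h2
    have hexp : (((m+1:ℕ):ℝ) - 1) / (k:ℝ) = (m:ℝ) / (k:ℝ) := by
      push_cast
      ring
    rw [hexp, hdetA, abs_mul]
    exact mul_le_mul_of_nonneg_left h1 (abs_nonneg _)
  refine ⟨part1, ?_⟩
  have hmpos : 0 < m := hm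
  have := part1 m hmpos
  have hexp1 : (((m+1:ℕ):ℝ) - 1) / (m:ℝ) = 1 := by
    have : (m:ℝ) ≠ 0 := Nat.cast_ne_zero.mpr hmpos.ne'
    rw [show ((m+1:ℕ):ℝ) - 1 = m by push_cast; ring]
    exact div_self this
  rw [hexp1, Real.rpow_one] at this
  have hidx : m + 1 - 1 = m := by omega
  rw [hidx]
  exact this
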